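/- arXiv:2405.18142 — 2 statements merged into one kernel-verified Lean document; each statement's English description precedes it below -/
import Mathlib

section
/- (Theorem 2, finite-sample guarantee, inclusion form.) Let μ be a probability measure on ℝ^{(T+1)n} with finite first moment, supported on {w : first n coordinates equal x₀}, and let W = (w^1, …, w^N) be distributed according to the N-fold product measure μ^N. For each sample W, let (x^i(W), u^i(W)) be measurable functions such that w^i = x^i − Z blkdiag_{T+1}(A) x^i − Z blkdiag_{T+1}(B) u^i for every i (the data are consistent with the true dynamics), and define ŵ^i = x^i − Z𝒜̂x^i − Zℬ̂u^i, P̂_pred(W) = (1/N)Σ_i δ_{Φŵ^i}, and P̄_w(W) = (1/N)Σ_i δ_{w^i}. Suppose that for some κ > 0 and η ∈ (0,1), μ^N{ W : d_W(P̄_w(W), μ) > κ } ≤ η, and suppose the radius function satisfies ε(W) ≥ (1/N)Σ_{i=1}^N ‖R_Φ Φ Z Δℳ (Φŵ^i − [x^i; u^i])‖ + ‖R_Φ Φ Z‖ κ for every W. Then, with μ^N-probability at least 1 − η, the true closed-loop distribution P_cl = (R_ΦΦ)#μ satisfies d_W(P̂_pred(W), P_cl) ≤ ε(W); in particular, on this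 event, for every bounded Borel function h, the expectation of h under P_cl is at most the supremum of the expectation of h over all probability measures Q with d_W(P̂_pred(W), Q) ≤ ε(W). -/
open MeasureTheory Matrix
open scoped ENNReal

/-- The ℓ¹-norm of a vector. -/
noncomputable def l1norm {ι : Type*} [Fintype ι] (v : ι → ℝ) : ℝ := ∑ i, |v i|

/-- The induced ℓ¹-norm of a matrix (maximum absolute column sum). -/
noncomputable def matL1 {ι κ : Type*} [Fintype ι] [Fintype κ] (M : Matrix ι κ ℝ) : ℝ :=
  ⨆ j, ∑ i, |M i j|

/-- The Wasserstein-1 distance (w.r.t. the ℓ¹-norm): infimum over couplings of the expected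
ℓ¹-distance. -/
noncomputable def wass {ι : Type*} [Fintype ι] (P Q : Measure (ι → ℝ)) : ℝ :=
  sInf { r | ∃ π : Measure ((ι → ℝ) × (ι → ℝ)),
    IsProbabilityMeasure π ∧ π.map Prod.fst = P ∧ π.map Prod.snd = Q ∧
    r = ∫ p, l1norm (p.1 - p.2) ∂π }

/-- The uniform empirical measure `(1/N) ∑ᵢ δ_{a i}`. -/
noncomputable def emp {ι : Type*} [Fintype ι] {N : ℕ} (a : Fin N → (ι → ℝ)) :
    Measure (ι → ℝ) :=
  (N : ℝ≥0∞)⁻¹ • ∑ i, Measure.dirac (a i)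

/-- The block-downshift matrix `Z`, with `n × n` identity blocks on the first block
subdiagonal and zero blocks elsewhere. -/
noncomputable def dshift (T n : ℕ) : Matrix (Fin (T+1) × Fin n) (Fin (T+1) × Fin n) ℝ :=
  fun p q => if (p.1 : ℕ) = (q.1 : ℕ) + 1 ∧ p.2 = q.2 then 1 else 0

/-- `blkdiag T M`: block-diagonal matrix with `T+1` copies of `M` on the diagonal. -/
noncomputable def blkdiag (T : ℕ) {n m : ℕ} (M : Matrix (Fin n) (Fin m) ℝ) :
    Matrix (Fin (T+1) × Fin n) (Fin (T+1) × Fin m) ℝ :=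
  fun p q => if p.1 = q.1 then M p.2 q.2 else 0

/-- A block-partitioned matrix is block lower triangular: all blocks strictly above the
block diagonal are zero. -/
def BlockLT {T n m : ℕ} (M : Matrix (Fin (T+1) × Fin m) (Fin (T+1) × Fin n) ℝ) : Prop :=
  ∀ p q, p.1 < q.1 → M p q = 0

section helpers
variable {ι κι : Type*} [Fintype ι] [Fintype κι]

lemma l1norm_nonneg (v : ι → ℝ) : 0 ≤ l1norm v :=
  Finset.sum_nonneg fun i _ => abs_nonneg _

lemma l1norm_tri (a b : ι → ℝ) : l1norm (a + b) ≤ l1norm a + l1norm b := by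
  rw [l1norm, l1norm, l1norm, ← Finset.sum_add_distrib]
  exact Finset.sum_le_sum fun i _ => abs_add_le _ _

lemma l1norm_sub_tri (a b c : ι → ℝ) : l1norm (a - c) ≤ l1norm (a - b) + l1norm (b - c) := by
  have : a - c = (a - b) + (b - c) := by abel
  rw [this]; exact l1norm_tri _ _

lemma colsum_le_matL1 (M : Matrix ι κι ℝ) (j : κι) : ∑ i, |M i j| ≤ matL1 M := by
  exact le_ciSup (f := fun j => ∑ i, |M i j|) (Set.Finite.bddAbove (Set.finite_range _)) j

lemma matL1_nonneg [Nonempty κι] (M : Matrix ι κι ℝ) : 0 ≤ matL1 M := by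
  obtain ⟨j⟩ := (inferInstance : Nonempty κι)
  exact le_trans (Finset.sum_nonneg fun i _ => abs_nonneg _) (colsum_le_matL1 M j)

lemma matL1_le (M : Matrix ι κι ℝ) {C : ℝ} (hC : 0 ≤ C) (h : ∀ j, ∑ i, |M i j| ≤ C) :
    matL1 M ≤ C := by
  rcases isEmpty_or_nonempty κι with he | hne
  · simpa [matL1, ciSup_of_empty] using hC
  · exact ciSup_le h

lemma l1norm_mulVec_le [Nonempty κι] (M : Matrix ι κι ℝ) (v : κι → ℝ) :
    l1norm (M *ᵥ v) ≤ matL1 M * l1norm v := by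
  calc l1norm (M *ᵥ v) = ∑ i, |∑ j, M i j * v j| := rfl
    _ ≤ ∑ i, ∑ j, |M i j * v j| :=
        Finset.sum_le_sum fun i _ => Finset.abs_sum_le_sum_abs _ _
    _ = ∑ j, (∑ i, |M i j|) * |v j| := by
        rw [Finset.sum_comm]
        exact Finset.sum_congr rfl fun j _ => by rw [Finset.sum_mul]; exact Finset.sum_congr rfl fun i _ => abs_mul _ _
    _ ≤ ∑ j, matL1 M * |v j| :=
        Finset.sum_le_sum fun j _ => mul_le_mul_of_nonneg_right (colsum_le_matL1 M j) (abs_nonneg _)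
    _ = matL1 M * l1norm v := by rw [l1norm, Finset.mul_sum]

lemma measurable_l1norm : Measurable (l1norm : (ι → ℝ) → ℝ) := by
  unfold l1norm
  exact Finset.measurable_sum _ fun i _ => (measurable_pi_apply i).abs

lemma measurable_mulVec (M : Matrix ι κι ℝ) : Measurable (fun v : κι → ℝ => M *ᵥ v) := by
  refine measurable_pi_lambda _ fun i => ?_
  exact Finset.measurable_sum _ fun j _ => (measurable_pi_apply j).const_mul _

instance emp_prob {N : ℕ} [NeZero N] (a : Fin N → (ι → ℝ)) : IsProbabilityMeasure (emp a) := by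
  constructor
  rw [emp, Measure.smul_apply, Measure.finset_sum_apply]
  simp [Measure.dirac_apply, ENNReal.inv_mul_cancel, NeZero.ne N]

end helpers

section big
variable {ι κι : Type*} [Fintype ι] [Fintype κι] {N : ℕ}

lemma l1norm_le_add (p : (ι → ℝ) × (ι → ℝ)) :
    l1norm (p.1 - p.2) ≤ l1norm p.1 + l1norm p.2 := by
  have := l1norm_sub_tri p.1 0 p.2
  simpa [sub_zero, zero_sub, l1norm] using this

lemma meas_cost : Measurable (fun p : (ι → ℝ) × (ι → ℝ) => l1norm (p.1 - p.2)) :=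
  measurable_l1norm.comp (measurable_fst.sub measurable_snd)

/-- lintegral of cost against emp on the first coordinate is finite -/
lemma emp_lint [NeZero N] (a : Fin N → (ι → ℝ)) :
    ∫⁻ v, ENNReal.ofReal (l1norm v) ∂(emp a) < ∞ := by
  rw [emp, lintegral_smul_measure, lintegral_finset_sum_measure]
  refine ENNReal.mul_lt_top ?_ ?_
  · exact ENNReal.inv_lt_top.2 (by exact_mod_cast Nat.pos_of_ne_zero (NeZero.ne N))
  · refine ENNReal.sum_lt_top.2 fun i _ => ?_
    exact lt_of_eq_of_lt
      (lintegral_dirac' (a i) (f := fun v => ENNReal.ofReal (l1norm v))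
        measurable_l1norm.ennreal_ofReal) ENNReal.ofReal_lt_top

theorem wass_le_transport [NeZero N] (a : Fin N → (ι → ℝ)) (b : Fin N → (κι → ℝ))
    (Q : Measure (ι → ℝ)) [IsProbabilityMeasure Q]
    (hQint : Integrable (fun v => l1norm v) Q)
    (F : (ι → ℝ) → (κι → ℝ)) (hF : Measurable F)
    (c : ℝ) (hc : 0 ≤ c) (S : Set (ι → ℝ)) (hS : MeasurableSet S)
    (haS : ∀ i, a i ∈ S) (hQS : ∀ᵐ v ∂Q, v ∈ S)
    (hLip : ∀ v ∈ S, ∀ v' ∈ S, l1norm (F v - F v') ≤ c * l1norm (v - v'))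
    (hemp : IsProbabilityMeasure (emp a)) :
    wass (emp b) (Q.map F) ≤
      (N : ℝ)⁻¹ * (∑ i, l1norm (b i - F (a i))) + c * wass (emp a) Q := by
  classical
  set A : ℝ := (N : ℝ)⁻¹ * (∑ i, l1norm (b i - F (a i))) with hA
  have hA0 : 0 ≤ A :=
    mul_nonneg (by positivity) (Finset.sum_nonneg fun i _ => l1norm_nonneg _)
  set 𝒮 : Set ℝ := { r | ∃ π : Measure ((ι → ℝ) × (ι → ℝ)),
    IsProbabilityMeasure π ∧ π.map Prod.fst = emp a ∧ π.map Prod.snd = Q ∧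
    r = ∫ p, l1norm (p.1 - p.2) ∂π } with h𝒮
  -- nonemptiness of the coupling set
  have hne : 𝒮.Nonempty := by
    refine ⟨_, (emp a).prod Q, inferInstance, ?_, ?_, rfl⟩
    · simp [Measure.map_fst_prod]
    · simp [Measure.map_snd_prod]
  have hbdd : ∀ r ∈ 𝒮, (0:ℝ) ≤ r := by
    rintro r ⟨π, _, _, _, rfl⟩
    exact integral_nonneg fun p => l1norm_nonneg _
  -- main step
  have main : ∀ r ∈ 𝒮, wass (emp b) (Q.map F) ≤ A + c * r := by
    rintro r ⟨π, hπprob, hπ1, hπ2, hrdef⟩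
    have hr0 : 0 ≤ r := hrdef ▸ integral_nonneg fun p => l1norm_nonneg _
    -- counts
    set cnt : (ι → ℝ) → ℕ := fun v => (Finset.univ.filter (fun j => a j = v)).card with hcnt
    have hatom : ∀ v, π (Prod.fst ⁻¹' {v}) = (N : ℝ≥0∞)⁻¹ * cnt v := by
      intro v
      have h1 : π (Prod.fst ⁻¹' {v}) = (π.map Prod.fst) {v} :=
        (Measure.map_apply measurable_fst (measurableSet_singleton v)).symm
      rw [h1, hπ1, emp, Measure.smul_apply, Measure.finset_sum_apply]
      have e : (∑ i, Measure.dirac (a i) {v}) = (cnt v : ℝ≥0∞) := by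
        rw [show (∑ i, Measure.dirac (a i) {v}) = ∑ i, if a i = v then (1:ℝ≥0∞) else 0 from
          Finset.sum_congr rfl fun i _ => by
            rw [Measure.dirac_apply' _ (measurableSet_singleton v)]
            simp [Set.indicator_apply]]
        simp [hcnt, Finset.sum_boole]
      rw [e, smul_eq_mul]
    have hcnt_pos : ∀ i, 0 < cnt (a i) := fun i =>
      Finset.card_pos.2 ⟨i, by simp [hcnt]⟩
    set σ : Fin N → Measure ((ι → ℝ) × (ι → ℝ)) := fun i =>
      ((cnt (a i) : ℝ≥0∞))⁻¹ • π.restrict (Prod.fst ⁻¹' {a i}) with hσ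
    have hσapp : ∀ i (t : Set ((ι → ℝ) × (ι → ℝ))), MeasurableSet t →
        σ i t = ((cnt (a i) : ℝ≥0∞))⁻¹ * π (t ∩ Prod.fst ⁻¹' {a i}) := by
      intro i t ht
      rw [hσ]; simp [Measure.restrict_apply ht]
    have hσmass : ∀ i, σ i Set.univ = (N : ℝ≥0∞)⁻¹ := by
      intro i
      have hc0 : (cnt (a i) : ℝ≥0∞) ≠ 0 := Nat.cast_ne_zero.2 (hcnt_pos i).ne'
      rw [hσapp i _ MeasurableSet.univ, Set.univ_inter, hatom,
        mul_comm ((N : ℝ≥0∞))⁻¹, ← mul_assoc,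
        ENNReal.inv_mul_cancel hc0 (ENNReal.natCast_ne_top _), one_mul]
    -- sum of σ i is π
    have hsum : (∑ i, σ i) = π := by
      ext s hs
      rw [Measure.finset_sum_apply]
      have e1 : ∀ i, σ i s = ((cnt (a i) : ℝ≥0∞))⁻¹ * π (s ∩ Prod.fst ⁻¹' {a i}) :=
        fun i => hσapp i s hs
      simp_rw [e1]
      set f : (ι → ℝ) → ℝ≥0∞ := fun v => ((cnt v : ℝ≥0∞))⁻¹ * π (s ∩ Prod.fst ⁻¹' {v}) with hf
      have e2 : (∑ i, ((cnt (a i) : ℝ≥0∞))⁻¹ * π (s ∩ Prod.fst ⁻¹' {a i})) = ∑ i, f (a i) := rfl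
      rw [e2, Finset.sum_comp f a]
      have e3 : ∀ v ∈ Finset.univ.image a,
          (Finset.univ.filter (fun i => a i = v)).card • f v = π (s ∩ Prod.fst ⁻¹' {v}) := by
        intro v hv
        obtain ⟨i, _, hi⟩ := Finset.mem_image.1 hv
        have hc0 : (cnt v : ℝ≥0∞) ≠ 0 := by
          exact_mod_cast (hi ▸ (hcnt_pos i).ne' : cnt v ≠ 0)
        rw [hf]
        rw [nsmul_eq_mul, ← mul_assoc]
        rw [show ((Finset.univ.filter (fun i => a i = v)).card : ℝ≥0∞) = (cnt v : ℝ≥0∞) from rfl]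
        rw [ENNReal.mul_inv_cancel hc0 (by simp), one_mul]
      rw [Finset.sum_congr rfl e3]
      have e4 : (∑ v ∈ Finset.univ.image a, π (s ∩ Prod.fst ⁻¹' {v}))
          = π (⋃ v ∈ Finset.univ.image a, s ∩ Prod.fst ⁻¹' {v}) := by
        rw [measure_biUnion_finset]
        · intro u hu v hv huv
          refine Set.disjoint_left.2 fun p hpu hpv => huv ?_
          have : p.1 = u := hpu.2
          have h2 : p.1 = v := hpv.2
          rw [← this, h2]
        · exact fun v _ => hs.inter (measurable_fst (measurableSet_singleton v))
      rw [e4]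
      have e5 : (⋃ v ∈ Finset.univ.image a, s ∩ Prod.fst ⁻¹' {v})
          = s ∩ Prod.fst ⁻¹' (↑(Finset.univ.image a) : Set (ι → ℝ)) := by
        ext p
        constructor
        · rintro hp
          rw [Set.mem_iUnion] at hp
          obtain ⟨v, hv⟩ := hp
          rw [Set.mem_iUnion] at hv
          obtain ⟨hvim, hps, hpv⟩ := hv
          have hpv' : p.1 = v := hpv
          exact ⟨hps, by simp only [Set.mem_preimage, hpv']; simpa using hvim⟩
        · rintro ⟨hps, hpim⟩
          simp only [Set.mem_iUnion]
          exact ⟨p.1, by simpa using hpim, hps, rfl⟩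
      rw [e5]
      have hcompl : π ((Prod.fst ⁻¹' (↑(Finset.univ.image a) : Set (ι → ℝ)))ᶜ) = 0 := by
        rw [← Set.preimage_compl, ← Measure.map_apply measurable_fst ((Finset.univ.image a).measurableSet.compl),
          hπ1, emp, Measure.smul_apply, Measure.finset_sum_apply]
        have : ∀ i, Measure.dirac (a i) ((↑(Finset.univ.image a) : Set (ι → ℝ))ᶜ) = 0 := by
          intro i
          rw [Measure.dirac_apply' _ (Finset.univ.image a).measurableSet.compl]
          simp [Set.indicator_apply, Finset.mem_image]
        simp [this]
      refine le_antisymm (measure_mono Set.inter_subset_left) ?_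
      calc π s ≤ π ((s ∩ Prod.fst ⁻¹' (↑(Finset.univ.image a) : Set (ι → ℝ)))
            ∪ (Prod.fst ⁻¹' (↑(Finset.univ.image a) : Set (ι → ℝ)))ᶜ) := by
            refine measure_mono fun p hp => ?_
            by_cases hmem : p ∈ Prod.fst ⁻¹' (↑(Finset.univ.image a) : Set (ι → ℝ))
            · exact Or.inl ⟨hp, hmem⟩
            · exact Or.inr hmem
        _ ≤ π (s ∩ Prod.fst ⁻¹' (↑(Finset.univ.image a) : Set (ι → ℝ))) + 0 := by
            refine le_trans (measure_union_le _ _) ?_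
            rw [hcompl]
        _ = _ := add_zero _
    -- the transported coupling
    set G : Fin N → ((ι → ℝ) × (ι → ℝ)) → ((κι → ℝ) × (κι → ℝ)) :=
      fun i p => (b i, F p.2) with hG
    have hGmeas : ∀ i, Measurable (G i) :=
      fun i => measurable_const.prodMk (hF.comp measurable_snd)
    set Pi : Measure ((κι → ℝ) × (κι → ℝ)) := ∑ i, (σ i).map (G i) with hPi
    have hPiapp : ∀ t, MeasurableSet t → Pi t = ∑ i, σ i (G i ⁻¹' t) := by
      intro t ht
      rw [hPi, Measure.finset_sum_apply]
      exact Finset.sum_congr rfl fun i _ => Measure.map_apply (hGmeas i) ht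
    have hPiuniv : Pi Set.univ = 1 := by
      rw [hPiapp _ MeasurableSet.univ]
      simp only [Set.preimage_univ, hσmass]
      rw [Finset.sum_const, Finset.card_univ, Fintype.card_fin, nsmul_eq_mul]
      exact ENNReal.mul_inv_cancel (by exact_mod_cast NeZero.ne N) (ENNReal.natCast_ne_top _)
    have hPiprob : IsProbabilityMeasure Pi := ⟨hPiuniv⟩
    have hm1 : Pi.map Prod.fst = emp b := by
      ext t ht
      rw [Measure.map_apply measurable_fst ht, hPiapp _ (measurable_fst ht)]
      rw [emp, Measure.smul_apply, Measure.finset_sum_apply, smul_eq_mul, Finset.mul_sum]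
      refine Finset.sum_congr rfl fun i _ => ?_
      have hpre : G i ⁻¹' (Prod.fst ⁻¹' t) = if b i ∈ t then Set.univ else (∅ : Set _) := by
        by_cases hb : b i ∈ t <;> simp [hG, Set.preimage, hb]
      rw [hpre, Measure.dirac_apply' _ ht]
      by_cases hb : b i ∈ t
      · simp only [hb, if_true, Set.indicator_apply, hσmass i]
        simp [hb]
      · simp only [hb, if_false, Set.indicator_apply]
        simp [hb]
    have hm2 : Pi.map Prod.snd = Q.map F := by
      ext t ht
      rw [Measure.map_apply measurable_snd ht, hPiapp _ (measurable_snd ht),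
        Measure.map_apply hF ht]
      have hpre : ∀ i, G i ⁻¹' (Prod.snd ⁻¹' t) = Prod.snd ⁻¹' (F ⁻¹' t) := fun i => rfl
      simp_rw [hpre]
      have hsum2 : (∑ i, σ i (Prod.snd ⁻¹' (F ⁻¹' t))) = π (Prod.snd ⁻¹' (F ⁻¹' t)) := by
        rw [← Measure.finset_sum_apply, hsum]
      rw [hsum2, ← Measure.map_apply measurable_snd (hF ht), hπ2]
    -- a.e. facts for σ i
    have hσ1 : ∀ i, ∀ᵐ p ∂(σ i), p.1 = a i := by
      intro i
      rw [ae_iff]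
      have hmeas : MeasurableSet {p : (ι → ℝ) × (ι → ℝ) | ¬ p.1 = a i} :=
        measurable_fst (measurableSet_singleton (a i)).compl
      rw [hσapp i _ hmeas]
      have he : ({p : (ι → ℝ) × (ι → ℝ) | ¬ p.1 = a i} ∩ Prod.fst ⁻¹' {a i}) = ∅ := by
        ext p; simp [Set.mem_preimage]
      rw [he]; simp
    have hπS : π {p : (ι → ℝ) × (ι → ℝ) | ¬ p.2 ∈ S} = 0 := by
      have he : {p : (ι → ℝ) × (ι → ℝ) | ¬ p.2 ∈ S} = Prod.snd ⁻¹' Sᶜ := rfl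
      rw [he, ← Measure.map_apply measurable_snd hS.compl, hπ2]
      exact ae_iff.1 hQS
    have hσ2 : ∀ i, ∀ᵐ p ∂(σ i), p.2 ∈ S := by
      intro i
      rw [ae_iff]
      refine le_antisymm ?_ zero_le
      have hmeas : MeasurableSet {p : (ι → ℝ) × (ι → ℝ) | ¬ p.2 ∈ S} :=
        measurable_snd hS.compl
      rw [hσapp i _ hmeas]
      calc ((cnt (a i) : ℝ≥0∞))⁻¹ * π ({p : (ι → ℝ) × (ι → ℝ) | ¬ p.2 ∈ S} ∩ Prod.fst ⁻¹' {a i})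
          ≤ ((cnt (a i) : ℝ≥0∞))⁻¹ * π {p : (ι → ℝ) × (ι → ℝ) | ¬ p.2 ∈ S} :=
            mul_le_mul_right (measure_mono Set.inter_subset_left) _
        _ = 0 := by rw [hπS, mul_zero]
    -- lintegral cost bound
    set g : ((ι → ℝ) × (ι → ℝ)) → ℝ≥0∞ := fun p => ENNReal.ofReal (l1norm (p.1 - p.2)) with hg
    set g' : ((κι → ℝ) × (κι → ℝ)) → ℝ≥0∞ := fun p => ENNReal.ofReal (l1norm (p.1 - p.2)) with hg'
    have hgmeas : Measurable g := meas_cost.ennreal_ofReal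
    have hg'meas : Measurable g' := meas_cost.ennreal_ofReal
    have hπlint : ∫⁻ p, g p ∂π = ENNReal.ofReal r := by
      rw [hrdef]
      refine (ofReal_integral_eq_lintegral_ofReal ?_ ?_).symm
      · refine ⟨meas_cost.aestronglyMeasurable, ?_⟩
        have hb2 : ∀ p : (ι → ℝ) × (ι → ℝ), (‖l1norm (p.1 - p.2)‖₊ : ℝ≥0∞)
            ≤ ENNReal.ofReal (l1norm p.1) + ENNReal.ofReal (l1norm p.2) := by
          intro p
          rw [← ENNReal.ofReal_add (l1norm_nonneg _) (l1norm_nonneg _),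
            show ((‖l1norm (p.1 - p.2)‖₊ : ℝ≥0∞)) = ENNReal.ofReal (l1norm (p.1 - p.2)) from
              Real.enorm_eq_ofReal (l1norm_nonneg _)]
          exact ENNReal.ofReal_le_ofReal (l1norm_le_add p)
        refine lt_of_le_of_lt (lintegral_mono hb2) ?_
        have hml : Measurable fun p : (ι → ℝ) × (ι → ℝ) => ENNReal.ofReal (l1norm p.1) :=
          (measurable_l1norm.comp measurable_fst).ennreal_ofReal
        rw [lintegral_add_left hml]
        have h1 : ∫⁻ p : (ι → ℝ) × (ι → ℝ), ENNReal.ofReal (l1norm p.1) ∂π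
            = ∫⁻ v, ENNReal.ofReal (l1norm v) ∂(emp a) := by
          rw [← hπ1, lintegral_map measurable_l1norm.ennreal_ofReal measurable_fst]
        have h2 : ∫⁻ p : (ι → ℝ) × (ι → ℝ), ENNReal.ofReal (l1norm p.2) ∂π
            = ∫⁻ v, ENNReal.ofReal (l1norm v) ∂Q := by
          rw [← hπ2, lintegral_map measurable_l1norm.ennreal_ofReal measurable_snd]
        have h3 : ∫⁻ v, ENNReal.ofReal (l1norm v) ∂Q < ∞ :=
          lt_of_le_of_lt (lintegral_ofReal_le_lintegral_enorm _) hQint.2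
        rw [h1, h2]
        exact ENNReal.add_lt_top.2 ⟨emp_lint a, h3⟩
      · exact Filter.Eventually.of_forall fun p => l1norm_nonneg _
    have key : ∫⁻ p, g' p ∂Pi ≤ ENNReal.ofReal A + ENNReal.ofReal c * ENNReal.ofReal r := by
      rw [hPi, lintegral_finset_sum_measure]
      have hi : ∀ i, ∫⁻ p, g' p ∂((σ i).map (G i))
          ≤ ENNReal.ofReal (l1norm (b i - F (a i))) * (N : ℝ≥0∞)⁻¹
            + ENNReal.ofReal c * ∫⁻ p, g p ∂(σ i) := by
        intro i
        rw [lintegral_map hg'meas (hGmeas i)]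
        have hae : ∀ᵐ p ∂(σ i), g' (G i p)
            ≤ ENNReal.ofReal (l1norm (b i - F (a i))) + ENNReal.ofReal c * g p := by
          filter_upwards [hσ1 i, hσ2 i] with p hp1 hp2
          have hstep : l1norm (b i - F p.2)
              ≤ l1norm (b i - F (a i)) + c * l1norm (p.1 - p.2) := by
            calc l1norm (b i - F p.2)
                ≤ l1norm (b i - F (a i)) + l1norm (F (a i) - F p.2) := l1norm_sub_tri _ _ _
              _ ≤ l1norm (b i - F (a i)) + c * l1norm (a i - p.2) :=
                  add_le_add le_rfl (hLip _ (haS i) _ hp2)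
              _ = l1norm (b i - F (a i)) + c * l1norm (p.1 - p.2) := by rw [hp1]
          calc g' (G i p) = ENNReal.ofReal (l1norm (b i - F p.2)) := rfl
            _ ≤ ENNReal.ofReal (l1norm (b i - F (a i)) + c * l1norm (p.1 - p.2)) :=
                ENNReal.ofReal_le_ofReal hstep
            _ = _ := by
                rw [ENNReal.ofReal_add (l1norm_nonneg _) (mul_nonneg hc (l1norm_nonneg _)),
                  ENNReal.ofReal_mul hc]
        calc ∫⁻ p, g' (G i p) ∂(σ i)
            ≤ ∫⁻ p, (ENNReal.ofReal (l1norm (b i - F (a i))) + ENNReal.ofReal c * g p) ∂(σ i) :=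
              lintegral_mono_ae hae
          _ = ENNReal.ofReal (l1norm (b i - F (a i))) * σ i Set.univ
              + ENNReal.ofReal c * ∫⁻ p, g p ∂(σ i) := by
              rw [lintegral_add_left measurable_const, lintegral_const,
                lintegral_const_mul _ hgmeas]
          _ = _ := by rw [hσmass i]
      calc (∑ i, ∫⁻ p, g' p ∂((σ i).map (G i)))
          ≤ ∑ i, (ENNReal.ofReal (l1norm (b i - F (a i))) * (N : ℝ≥0∞)⁻¹
            + ENNReal.ofReal c * ∫⁻ p, g p ∂(σ i)) := Finset.sum_le_sum fun i _ => hi i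
        _ = (∑ i, ENNReal.ofReal (l1norm (b i - F (a i)))) * (N : ℝ≥0∞)⁻¹
            + ENNReal.ofReal c * ∫⁻ p, g p ∂π := by
            rw [Finset.sum_add_distrib, ← Finset.sum_mul, ← Finset.mul_sum,
              ← lintegral_finset_sum_measure, hsum]
        _ = ENNReal.ofReal A + ENNReal.ofReal c * ENNReal.ofReal r := by
            rw [hπlint]
            congr 1
            rw [hA, ENNReal.ofReal_mul (by positivity),
              ENNReal.ofReal_sum_of_nonneg (fun i _ => l1norm_nonneg _), mul_comm]
            congr 1
            rw [ENNReal.ofReal_inv_of_pos (by exact_mod_cast Nat.pos_of_ne_zero (NeZero.ne N))]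
            simp
    have hPiint : Integrable (fun p : (κι → ℝ) × (κι → ℝ) => l1norm (p.1 - p.2)) Pi := by
      refine ⟨meas_cost.aestronglyMeasurable, ?_⟩
      have he : ∫⁻ p, (‖l1norm (p.1 - p.2)‖₊ : ℝ≥0∞) ∂Pi = ∫⁻ p, g' p ∂Pi :=
        lintegral_congr fun p => Real.enorm_eq_ofReal (l1norm_nonneg _)
      refine lt_of_le_of_lt (le_of_eq he) (lt_of_le_of_lt key ?_)
      exact ENNReal.add_lt_top.2 ⟨ENNReal.ofReal_lt_top,
        ENNReal.mul_lt_top ENNReal.ofReal_lt_top ENNReal.ofReal_lt_top⟩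
    have hwmem : wass (emp b) (Q.map F) ≤ ∫ p, l1norm (p.1 - p.2) ∂Pi := by
      apply csInf_le
      · refine ⟨0, fun x hx => ?_⟩
        obtain ⟨π', _, _, _, rfl⟩ := hx
        exact integral_nonneg fun p => l1norm_nonneg _
      · exact ⟨Pi, hPiprob, hm1, hm2, rfl⟩
    have hofr' : ENNReal.ofReal (∫ p, l1norm (p.1 - p.2) ∂Pi) = ∫⁻ p, g' p ∂Pi :=
      ofReal_integral_eq_lintegral_ofReal hPiint
        (Filter.Eventually.of_forall fun p => l1norm_nonneg _)
    have hr'le : (∫ p, l1norm (p.1 - p.2) ∂Pi) ≤ A + c * r := by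
      have h1 : ENNReal.ofReal (∫ p, l1norm (p.1 - p.2) ∂Pi) ≤ ENNReal.ofReal (A + c * r) := by
        rw [hofr', ENNReal.ofReal_add hA0 (mul_nonneg hc hr0), ENNReal.ofReal_mul hc]
        exact key
      exact (ENNReal.ofReal_le_ofReal_iff (add_nonneg hA0 (mul_nonneg hc hr0))).1 h1
    exact hwmem.trans hr'le
  -- conclude from `main`
  have hwq : wass (emp a) Q = sInf 𝒮 := rfl
  rcases eq_or_lt_of_le hc with hc0 | hcpos
  · obtain ⟨r₀, hr₀⟩ := hne
    have h := main r₀ hr₀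
    rw [← hc0] at h ⊢
    simpa using h
  · have hstep : (wass (emp b) (Q.map F) - A) / c ≤ sInf 𝒮 := by
      refine le_csInf hne fun r hr => ?_
      have h := main r hr
      rw [div_le_iff₀ hcpos]
      linarith [mul_comm c r]
    have h2 : wass (emp b) (Q.map F) - A ≤ c * sInf 𝒮 := by
      have := mul_le_mul_of_nonneg_left hstep (le_of_lt hcpos)
      rwa [mul_div_cancel₀ _ (ne_of_gt hcpos)] at this
    rw [hwq]
    linarith

end big

section mat
variable {n m T : ℕ}

lemma dshiftT_apply (u : Fin (T+1) × Fin n → ℝ) (q : Fin (T+1) × Fin n) :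
    ((dshift T n)ᵀ *ᵥ u) q =
      if h : (q.1 : ℕ) + 1 < T + 1 then u (⟨(q.1 : ℕ) + 1, h⟩, q.2) else 0 := by
  rw [mulVec, dotProduct]
  by_cases h : (q.1 : ℕ) + 1 < T + 1
  · rw [dif_pos h]
    rw [Finset.sum_eq_single ((⟨(q.1 : ℕ) + 1, h⟩, q.2) : Fin (T+1) × Fin n)]
    · simp [transpose_apply, dshift]
    · intro p _ hp
      rw [transpose_apply, dshift]
      split_ifs with hcond
      · exact absurd (show p = ((⟨(q.1 : ℕ) + 1, h⟩, q.2) : Fin (T+1) × Fin n) from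
          Prod.ext_iff.mpr ⟨Fin.ext hcond.1, hcond.2⟩) hp
      · exact zero_mul _
    · intro habs; exact absurd (Finset.mem_univ _) habs
  · rw [dif_neg h]
    refine Finset.sum_eq_zero fun p _ => ?_
    rw [transpose_apply, dshift]
    split_ifs with hcond
    · exact absurd (hcond.1 ▸ p.1.isLt) (by omega)
    · exact zero_mul _

lemma dshift_dshiftT (u : Fin (T+1) × Fin n → ℝ) (hu : ∀ j, u (0, j) = 0) :
    dshift T n *ᵥ ((dshift T n)ᵀ *ᵥ u) = u := by
  funext p
  obtain ⟨t, j⟩ := p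
  rw [mulVec, dotProduct]
  by_cases ht : (t : ℕ) = 0
  · have h0 : t = 0 := Fin.ext ht
    subst h0
    rw [show u ((0 : Fin (T+1)), j) = 0 from hu j]
    refine Finset.sum_eq_zero fun q _ => ?_
    rw [show dshift T n (0, j) q = 0 from by rw [dshift]; simp]
    exact zero_mul _
  · obtain ⟨t', ht'⟩ : ∃ t' : ℕ, (t : ℕ) = t' + 1 := ⟨(t : ℕ) - 1, by omega⟩
    have ht'lt : t' < T + 1 := by have := t.isLt; omega
    rw [Finset.sum_eq_single ((⟨t', ht'lt⟩, j) : Fin (T+1) × Fin n)]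
    · rw [show dshift T n (t, j) (⟨t', ht'lt⟩, j) = 1 from by rw [dshift]; simp [ht']]
      rw [one_mul, dshiftT_apply]
      have hlt : t' + 1 < T + 1 := by have := t.isLt; omega
      rw [dif_pos hlt]
      congr 1
      exact Prod.ext_iff.mpr ⟨Fin.ext (by simp [ht']), rfl⟩
    · intro q _ hq
      rw [show dshift T n (t, j) q = 0 from ?_]
      · exact zero_mul _
      · rw [dshift]
        split_ifs with hcond
        · obtain ⟨hc1, hc2⟩ := hcond
          refine absurd ?_ hq
          refine Prod.ext_iff.mpr ⟨Fin.ext ?_, hc2.symm⟩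
          show (q.1 : ℕ) = t'
          have h1 : ((t : Fin (T+1)) : ℕ) = (q.1 : ℕ) + 1 := hc1
          omega
        · rfl
    · intro habs; exact absurd (Finset.mem_univ _) habs

lemma matL1_dshiftT : matL1 ((dshift T n)ᵀ : Matrix _ _ ℝ) ≤ 1 := by
  refine matL1_le _ zero_le_one fun q => ?_
  have he : ∀ p : Fin (T+1) × Fin n, |(dshift T n)ᵀ p q| =
      if (q.1 : ℕ) = (p.1 : ℕ) + 1 ∧ q.2 = p.2 then 1 else 0 := by
    intro p
    rw [transpose_apply, dshift]
    split_ifs <;> simp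
  rw [Finset.sum_congr rfl fun p _ => he p, Finset.sum_boole]
  have hcard : (Finset.univ.filter
      fun p : Fin (T+1) × Fin n => (q.1 : ℕ) = (p.1 : ℕ) + 1 ∧ q.2 = p.2).card ≤ 1 := by
    refine Finset.card_le_one.2 fun p1 h1 p2 h2 => ?_
    simp only [Finset.mem_filter] at h1 h2
    obtain ⟨-, hq1, hq2⟩ := h1
    obtain ⟨-, hq1', hq2'⟩ := h2
    exact Prod.ext_iff.mpr ⟨Fin.ext (by omega), hq2.symm.trans hq2'⟩
  exact_mod_cast hcard

lemma lip_bound [Nonempty (Fin n)] {κ' : Type*} [Fintype κ'] [Nonempty κ']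
    (M : Matrix κ' (Fin (T+1) × Fin n) ℝ) (x0 : Fin n → ℝ) (v v' : Fin (T+1) × Fin n → ℝ)
    (hv : ∀ j, v (0, j) = x0 j) (hv' : ∀ j, v' (0, j) = x0 j) :
    l1norm (M *ᵥ v - M *ᵥ v') ≤ matL1 (M * dshift T n) * l1norm (v - v') := by
  have hu : ∀ j, (v - v') (0, j) = 0 := fun j => by simp [hv j, hv' j]
  have h1 : M *ᵥ v - M *ᵥ v' = (M * dshift T n) *ᵥ ((dshift T n)ᵀ *ᵥ (v - v')) := by
    rw [← mulVec_mulVec, dshift_dshiftT _ hu, mulVec_sub]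
  rw [h1]
  calc l1norm ((M * dshift T n) *ᵥ ((dshift T n)ᵀ *ᵥ (v - v')))
      ≤ matL1 (M * dshift T n) * l1norm ((dshift T n)ᵀ *ᵥ (v - v')) := l1norm_mulVec_le _ _
    _ ≤ matL1 (M * dshift T n) * (1 * l1norm (v - v')) := by
        refine mul_le_mul_of_nonneg_left ?_ (matL1_nonneg _)
        calc l1norm ((dshift T n)ᵀ *ᵥ (v - v')) ≤ matL1 ((dshift T n)ᵀ) * l1norm (v - v') :=
              l1norm_mulVec_le _ _
          _ ≤ 1 * l1norm (v - v') :=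
              mul_le_mul_of_nonneg_right matL1_dshiftT (l1norm_nonneg _)
    _ = matL1 (M * dshift T n) * l1norm (v - v') := by rw [one_mul]

/-- time index on the mixed index type -/
def tmx {n m T : ℕ} : ((Fin (T+1) × Fin n) ⊕ (Fin (T+1) × Fin m)) → ℕ :=
  Sum.elim (fun p => (p.1 : ℕ)) (fun p => (p.1 : ℕ))

lemma tmx_le {i : (Fin (T+1) × Fin n) ⊕ (Fin (T+1) × Fin m)} : tmx i ≤ T := by
  cases i with
  | inl p => exact Nat.lt_succ_iff.1 p.1.isLt
  | inr p => exact Nat.lt_succ_iff.1 p.1.isLt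

lemma det_one_add_shift
    (Φ : Matrix ((Fin (T+1) × Fin n) ⊕ (Fin (T+1) × Fin m)) (Fin (T+1) × Fin n) ℝ)
    (hΦ0 : ∀ i l, tmx i < (l.1 : ℕ) → Φ i l = 0)
    (ΔM : Matrix (Fin (T+1) × Fin n) ((Fin (T+1) × Fin n) ⊕ (Fin (T+1) × Fin m)) ℝ)
    (hΔ0 : ∀ k j, (k.1 : ℕ) ≠ tmx j → ΔM k j = 0) :
    (1 + Φ * dshift T n * ΔM).det = 1 := by
  classical
  set Mt := Φ * dshift T n * ΔM with hMt
  have hMt0 : ∀ i j, tmx i ≤ tmx j → Mt i j = 0 := by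
    intro i j hij
    rw [hMt, mul_apply]
    refine Finset.sum_eq_zero fun k _ => ?_
    by_cases hk : (k.1 : ℕ) = tmx j
    · have hz : (Φ * dshift T n) i k = 0 := by
        rw [mul_apply]
        refine Finset.sum_eq_zero fun l _ => ?_
        by_cases hl : (l.1 : ℕ) = (k.1 : ℕ) + 1
        · rw [hΦ0 i l (by omega), zero_mul]
        · rw [show dshift T n l k = 0 from by rw [dshift]; simp [hl], mul_zero]
      rw [hz, zero_mul]
    · rw [hΔ0 k j hk, mul_zero]
  have hbt : (1 + Mt).BlockTriangular (fun i => T - tmx i) := by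
    refine Matrix.blockTriangular_one.add ?_
    intro i j hij
    refine hMt0 i j ?_
    have hi : tmx i ≤ T := tmx_le
    have hj : tmx j ≤ T := tmx_le
    have hij' : T - tmx j < T - tmx i := hij
    omega
  rw [hbt.det]
  refine Finset.prod_eq_one fun aval _ => ?_
  have hblk : (1 + Mt).toSquareBlock (fun i => T - tmx i) aval = 1 := by
    ext ⟨i, hi⟩ ⟨j, hj⟩
    rw [Matrix.toSquareBlock_def]
    have htm : tmx i = tmx j := by
      have h1 : tmx i ≤ T := tmx_le
      have h2 : tmx j ≤ T := tmx_le
      have hi' : T - tmx i = aval := hi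
      have hj' : T - tmx j = aval := hj
      omega
    show (1 + Mt) i j = _
    rw [Matrix.add_apply, hMt0 i j (le_of_eq htm), add_zero]
    by_cases hij : i = j
    · subst hij; simp [Matrix.one_apply]
    · rw [Matrix.one_apply_ne hij,
        Matrix.one_apply_ne (fun hc => hij (Subtype.ext_iff.1 hc))]
  rw [hblk, Matrix.det_one]

lemma vec_identity
    (Ahat A : Matrix (Fin n) (Fin n) ℝ) (Bhat B : Matrix (Fin n) (Fin m) ℝ)
    (Φ : Matrix ((Fin (T+1) × Fin n) ⊕ (Fin (T+1) × Fin m)) (Fin (T+1) × Fin n) ℝ)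
    (ΔM : Matrix (Fin (T+1) × Fin n) ((Fin (T+1) × Fin n) ⊕ (Fin (T+1) × Fin m)) ℝ)
    (hΔM : ΔM = Matrix.fromCols (blkdiag T (Ahat - A)) (blkdiag T (Bhat - B)))
    (RΦ : Matrix (((Fin (T+1) × Fin n)) ⊕ (Fin (T+1) × Fin m))
                 (((Fin (T+1) × Fin n)) ⊕ (Fin (T+1) × Fin m)) ℝ)
    (hRmul : RΦ * (1 + Φ * dshift T n * ΔM) = 1)
    (w what : Fin (T+1) × Fin n → ℝ) (x : Fin (T+1) × Fin n → ℝ) (u : Fin (T+1) × Fin m → ℝ)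
    (hw : w = x - (dshift T n * blkdiag T A) *ᵥ x - (dshift T n * blkdiag T B) *ᵥ u)
    (hwh : what = x - (dshift T n * blkdiag T Ahat) *ᵥ x - (dshift T n * blkdiag T Bhat) *ᵥ u) :
    Φ *ᵥ what - (RΦ * Φ) *ᵥ w
      = (RΦ * Φ * dshift T n * ΔM) *ᵥ (Φ *ᵥ what - Sum.elim x u) := by
  have hstep1 : (dshift T n * ΔM) *ᵥ (Sum.elim x u) = w - what := by
    rw [hΔM, ← mulVec_mulVec, fromCols_mulVec_sumElim]
    have hA : blkdiag T (Ahat - A) = blkdiag T Ahat - blkdiag T A := by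
      ext p q; by_cases h : p.1 = q.1 <;> simp [blkdiag, h]
    have hB : blkdiag T (Bhat - B) = blkdiag T Bhat - blkdiag T B := by
      ext p q; by_cases h : p.1 = q.1 <;> simp [blkdiag, h]
    rw [hA, hB, hw, hwh]
    simp only [← mulVec_mulVec, mulVec_add, mulVec_sub, sub_mulVec]
    abel
  have hRB : RΦ * (Φ * dshift T n * ΔM) = 1 - RΦ := by
    have h := hRmul
    rw [mul_add, mul_one] at h
    exact eq_sub_of_add_eq' h
  have e1 : (RΦ * Φ * dshift T n * ΔM) * Φ = Φ - RΦ * Φ := by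
    rw [show RΦ * Φ * dshift T n * ΔM = RΦ * (Φ * dshift T n * ΔM) from by
      simp only [Matrix.mul_assoc], hRB, Matrix.sub_mul, Matrix.one_mul]
  have e2 : (RΦ * Φ * dshift T n * ΔM) *ᵥ (Sum.elim x u) = (RΦ * Φ) *ᵥ (w - what) := by
    rw [show RΦ * Φ * dshift T n * ΔM = (RΦ * Φ) * (dshift T n * ΔM) from by
      simp only [Matrix.mul_assoc], ← mulVec_mulVec, hstep1]
  rw [mulVec_sub, mulVec_mulVec, e1, e2, sub_mulVec, mulVec_sub]
  abel

end mat

/-- **Theorem 2, finite-sample guarantee, inclusion form.** If the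
disturbance samples concentrate around `μ` in Wasserstein distance with probability
`1 − η`, and the ambiguity radius dominates the distribution-shift bound, then with
probability at least `1 − η` the true closed-loop distribution lies in the ambiguity
ball around the empirical predictive distribution; in particular, its expectations of
bounded Borel functions are dominated by the worst case over the ambiguity ball. -/
theorem stmt13 {n m T N : ℕ} (hn : 0 < n) (hm : 0 < m) (hT : 0 < T) (hN : 0 < N)
    (Ahat A : Matrix (Fin n) (Fin n) ℝ) (Bhat B : Matrix (Fin n) (Fin m) ℝ)
    (Φx : Matrix (Fin (T+1) × Fin n) (Fin (T+1) × Fin n) ℝ)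
    (Φu : Matrix (Fin (T+1) × Fin m) (Fin (T+1) × Fin n) ℝ)
    (hx : BlockLT Φx) (hu : BlockLT Φu)
    (hSLS : (1 - dshift T n * blkdiag T Ahat) * Φx - dshift T n * blkdiag T Bhat * Φu = 1)
    (Φ : Matrix ((Fin (T+1) × Fin n) ⊕ (Fin (T+1) × Fin m)) (Fin (T+1) × Fin n) ℝ)
    (hΦ : Φ = Matrix.fromRows Φx Φu)
    (ΔM : Matrix (Fin (T+1) × Fin n) ((Fin (T+1) × Fin n) ⊕ (Fin (T+1) × Fin m)) ℝ)
    (hΔM : ΔM = Matrix.fromCols (blkdiag T (Ahat - A)) (blkdiag T (Bhat - B)))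
    (RΦ : Matrix ((Fin (T+1) × Fin n) ⊕ (Fin (T+1) × Fin m))
                 ((Fin (T+1) × Fin n) ⊕ (Fin (T+1) × Fin m)) ℝ)
    (hR : RΦ = (1 + Φ * dshift T n * ΔM)⁻¹)
    (x0 : Fin n → ℝ)
    (μ : Measure ((Fin (T+1) × Fin n) → ℝ)) [IsProbabilityMeasure μ]
    (hμmom : Integrable (fun v => l1norm v) μ)
    (hμsupp : ∀ᵐ v ∂μ, ∀ j, v (0, j) = x0 j)
    (X : (Fin N → (Fin (T+1) × Fin n) → ℝ) → Fin N → (Fin (T+1) × Fin n) → ℝ)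
    (U : (Fin N → (Fin (T+1) × Fin n) → ℝ) → Fin N → (Fin (T+1) × Fin m) → ℝ)
    (hXmeas : Measurable X) (hUmeas : Measurable U)
    (hconsistent : ∀ W i, W i = X W i - (dshift T n * blkdiag T A) *ᵥ X W i
        - (dshift T n * blkdiag T B) *ᵥ U W i)
    (what : (Fin N → (Fin (T+1) × Fin n) → ℝ) → Fin N → (Fin (T+1) × Fin n) → ℝ)
    (hwhat : ∀ W i, what W i = X W i - (dshift T n * blkdiag T Ahat) *ᵥ X W i
        - (dshift T n * blkdiag T Bhat) *ᵥ U W i)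
    (κ η : ℝ) (hκ : 0 < κ) (hη0 : 0 < η) (hη1 : η < 1)
    (hconc : (Measure.pi fun _ : Fin N => μ) {W | wass (emp W) μ > κ} ≤ ENNReal.ofReal η)
    (ε : (Fin N → (Fin (T+1) × Fin n) → ℝ) → ℝ)
    (hε : ∀ W, ε W ≥ (N : ℝ)⁻¹ * ∑ i, l1norm
          ((RΦ * Φ * dshift T n * ΔM) *ᵥ (Φ *ᵥ what W i - Sum.elim (X W i) (U W i)))
        + matL1 (RΦ * Φ * dshift T n) * κ) :
    (Measure.pi fun _ : Fin N => μ)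
      {W | wass (emp (fun i => Φ *ᵥ what W i)) (μ.map (fun v => (RΦ * Φ) *ᵥ v)) ≤ ε W ∧
        ∀ h : (((Fin (T+1) × Fin n) ⊕ (Fin (T+1) × Fin m)) → ℝ) → ℝ,
          Measurable h → (∃ C, ∀ y, |h y| ≤ C) →
          ∫ y, h y ∂(μ.map (fun v => (RΦ * Φ) *ᵥ v)) ≤
            sSup {r | ∃ Q : Measure ((((Fin (T+1) × Fin n) ⊕ (Fin (T+1) × Fin m)) → ℝ)),
              IsProbabilityMeasure Q ∧ Integrable (fun v => l1norm v) Q ∧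
              wass (emp (fun i => Φ *ᵥ what W i)) Q ≤ ε W ∧ r = ∫ y, h y ∂Q}}
      ≥ 1 - ENNReal.ofReal η := by
  classical
  haveI : NeZero N := ⟨hN.ne'⟩
  haveI hnen : Nonempty (Fin n) := ⟨⟨0, hn⟩⟩
  -- invertibility identity
  have hΦ0 : ∀ i l, tmx (m := m) i < (l.1 : ℕ) → Φ i l = 0 := by
    intro i l hil
    rw [hΦ]
    cases i with
    | inl p => rw [Matrix.fromRows_apply_inl]; exact hx p l hil
    | inr p => rw [Matrix.fromRows_apply_inr]; exact hu p l hil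
  have hΔ0 : ∀ k j, (k.1 : ℕ) ≠ tmx (n := n) (m := m) j → ΔM k j = 0 := by
    intro k j hkj
    rw [hΔM]
    cases j with
    | inl q =>
        rw [Matrix.fromCols_apply_inl]
        show (if k.1 = q.1 then (Ahat - A) k.2 q.2 else 0) = 0
        exact if_neg fun h => hkj (congrArg Fin.val h)
    | inr q =>
        rw [Matrix.fromCols_apply_inr]
        show (if k.1 = q.1 then (Bhat - B) k.2 q.2 else 0) = 0
        exact if_neg fun h => hkj (congrArg Fin.val h)
  have hdet : (1 + Φ * dshift T n * ΔM).det = 1 := det_one_add_shift Φ hΦ0 ΔM hΔ0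
  have hRmul : RΦ * (1 + Φ * dshift T n * ΔM) = 1 := by
    rw [hR]
    exact Matrix.nonsing_inv_mul _ (hdet ▸ isUnit_one)
  -- the support set
  set Sset : Set ((Fin (T+1) × Fin n) → ℝ) := {v | ∀ j, v (0, j) = x0 j} with hSset
  have hSmeas : MeasurableSet Sset := by
    have he : Sset = ⋂ j, (fun v : (Fin (T+1) × Fin n) → ℝ => v (0, j)) ⁻¹' {x0 j} := by
      ext v; simp [hSset, Set.mem_iInter]
    rw [he]
    exact MeasurableSet.iInter fun j => (measurable_pi_apply (0, j)) (measurableSet_singleton _)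
  set E : Set (Fin N → (Fin (T+1) × Fin n) → ℝ) := {W | ∀ i, W i ∈ Sset} with hE
  have hEc : (Measure.pi fun _ : Fin N => μ) Eᶜ = 0 := by
    have hsub : Eᶜ ⊆ ⋃ i, (Function.eval i) ⁻¹' Ssetᶜ := by
      intro W hW
      rw [Set.mem_compl_iff, hE, Set.mem_setOf_eq, not_forall] at hW
      obtain ⟨i, hi⟩ := hW
      exact Set.mem_iUnion.2 ⟨i, hi⟩
    refine measure_mono_null hsub ?_
    refine measure_iUnion_null fun i => ?_
    have hnull : μ Ssetᶜ = 0 := by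
      have h0 := ae_iff.1 hμsupp
      convert h0 using 2
      ext v; simp [hSset]
    exact MeasureTheory.Measure.pi_eval_preimage_null (μ := fun _ : Fin N => μ) hnull
  set Gset : Set (Fin N → (Fin (T+1) × Fin n) → ℝ) :=
    {W | ¬ wass (emp W) μ > κ} ∩ E with hG
  set F : ((Fin (T+1) × Fin n) → ℝ) → (((Fin (T+1) × Fin n) ⊕ (Fin (T+1) × Fin m)) → ℝ) :=
    fun v => (RΦ * Φ) *ᵥ v with hFdef
  set c : ℝ := matL1 (RΦ * Φ * dshift T n) with hcdef
  have hc : 0 ≤ c := matL1_nonneg _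
  -- Gset is contained in the target set
  have hsubset : Gset ⊆ {W | wass (emp (fun i => Φ *ᵥ what W i))
        (μ.map (fun v => (RΦ * Φ) *ᵥ v)) ≤ ε W ∧
      ∀ h : (((Fin (T+1) × Fin n) ⊕ (Fin (T+1) × Fin m)) → ℝ) → ℝ,
        Measurable h → (∃ C, ∀ y, |h y| ≤ C) →
        ∫ y, h y ∂(μ.map (fun v => (RΦ * Φ) *ᵥ v)) ≤
          sSup {r | ∃ Q : Measure ((((Fin (T+1) × Fin n) ⊕ (Fin (T+1) × Fin m)) → ℝ)),
            IsProbabilityMeasure Q ∧ Integrable (fun v => l1norm v) Q ∧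
            wass (emp (fun i => Φ *ᵥ what W i)) Q ≤ ε W ∧ r = ∫ y, h y ∂Q}} := by
    rintro W ⟨hWκ, hWE⟩
    have hwass_le : wass (emp W) μ ≤ κ := not_lt.1 hWκ
    have hlip : ∀ v ∈ Sset, ∀ v' ∈ Sset, l1norm (F v - F v') ≤ c * l1norm (v - v') := by
      intro v hv v' hv'
      exact lip_bound (RΦ * Φ) x0 v v' hv hv'
    have hW1 := wass_le_transport W (fun i => Φ *ᵥ what W i) μ hμmom F
      (measurable_mulVec _) c hc Sset hSmeas hWE hμsupp hlip inferInstance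
    have hid : ∀ i, Φ *ᵥ what W i - F (W i)
        = (RΦ * Φ * dshift T n * ΔM) *ᵥ (Φ *ᵥ what W i - Sum.elim (X W i) (U W i)) :=
      fun i => vec_identity Ahat A Bhat B Φ ΔM hΔM RΦ hRmul (W i) (what W i) (X W i) (U W i)
        (hconsistent W i) (hwhat W i)
    have hW2 : wass (emp (fun i => Φ *ᵥ what W i)) (μ.map (fun v => (RΦ * Φ) *ᵥ v)) ≤ ε W := by
      refine le_trans hW1 (le_trans ?_ (hε W))
      refine add_le_add ?_ (mul_le_mul_of_nonneg_left hwass_le hc)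
      refine le_of_eq ?_
      congr 1
      exact Finset.sum_congr rfl fun i _ => by rw [hid i]
    refine ⟨hW2, ?_⟩
    intro h hhm hbound
    obtain ⟨C, hC⟩ := hbound
    haveI hQ0p : IsProbabilityMeasure (μ.map (fun v => (RΦ * Φ) *ᵥ v)) :=
      Measure.isProbabilityMeasure_map (measurable_mulVec _).aemeasurable
    have hQ0int : Integrable (fun v => l1norm v) (μ.map (fun v => (RΦ * Φ) *ᵥ v)) := by
      rw [integrable_map_measure measurable_l1norm.aestronglyMeasurable
        (measurable_mulVec _).aemeasurable]
      have hint : Integrable (fun v => l1norm ((RΦ * Φ) *ᵥ v)) μ := by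
        refine Integrable.mono (hμmom.const_mul (matL1 (RΦ * Φ)))
          ((measurable_l1norm.comp (measurable_mulVec _)).aestronglyMeasurable) ?_
        refine Filter.Eventually.of_forall fun v => ?_
        rw [Real.norm_eq_abs, Real.norm_eq_abs, abs_of_nonneg (l1norm_nonneg _)]
        calc l1norm ((RΦ * Φ) *ᵥ v) ≤ matL1 (RΦ * Φ) * l1norm v := l1norm_mulVec_le _ _
          _ ≤ |matL1 (RΦ * Φ) * l1norm v| := le_abs_self _
      exact hint
    have hmem : (∫ y, h y ∂(μ.map (fun v => (RΦ * Φ) *ᵥ v))) ∈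
        {r | ∃ Q : Measure ((((Fin (T+1) × Fin n) ⊕ (Fin (T+1) × Fin m)) → ℝ)),
          IsProbabilityMeasure Q ∧ Integrable (fun v => l1norm v) Q ∧
          wass (emp (fun i => Φ *ᵥ what W i)) Q ≤ ε W ∧
          r = ∫ y, h y ∂Q} :=
      ⟨μ.map (fun v => (RΦ * Φ) *ᵥ v), hQ0p, hQ0int, hW2, rfl⟩
    refine le_csSup ?_ hmem
    refine ⟨|C|, ?_⟩
    rintro r ⟨Q', hQ'p, -, -, rfl⟩
    haveI := hQ'p
    have hnorm := norm_integral_le_of_norm_le_const (μ := Q') (f := h) (C := C)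
      (Filter.Eventually.of_forall fun y => by rw [Real.norm_eq_abs]; exact hC y)
    rw [probReal_univ, mul_one] at hnorm
    calc (∫ y, h y ∂Q') ≤ |∫ y, h y ∂Q'| := le_abs_self _
      _ = ‖∫ y, h y ∂Q'‖ := (Real.norm_eq_abs _).symm
      _ ≤ C := hnorm
      _ ≤ |C| := le_abs_self C
  -- measure bound
  have hmeasG : 1 - ENNReal.ofReal η ≤ (Measure.pi fun _ : Fin N => μ) Gset := by
    have hcover : (Set.univ : Set (Fin N → (Fin (T+1) × Fin n) → ℝ)) ⊆
        {W | wass (emp W) μ > κ} ∪ (Gset ∪ Eᶜ) := by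
      intro W _
      by_cases h1 : wass (emp W) μ > κ
      · exact Or.inl h1
      by_cases h2 : W ∈ E
      · exact Or.inr (Or.inl ⟨h1, h2⟩)
      · exact Or.inr (Or.inr h2)
    have h1 : (1 : ℝ≥0∞) ≤ ENNReal.ofReal η + (Measure.pi fun _ : Fin N => μ) Gset := by
      calc (1 : ℝ≥0∞) = (Measure.pi fun _ : Fin N => μ) Set.univ := measure_univ.symm
        _ ≤ (Measure.pi fun _ : Fin N => μ) ({W | wass (emp W) μ > κ} ∪ (Gset ∪ Eᶜ)) :=
            measure_mono hcover
        _ ≤ (Measure.pi fun _ : Fin N => μ) {W | wass (emp W) μ > κ}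
            + (Measure.pi fun _ : Fin N => μ) (Gset ∪ Eᶜ) := measure_union_le _ _
        _ ≤ ENNReal.ofReal η
            + ((Measure.pi fun _ : Fin N => μ) Gset + (Measure.pi fun _ : Fin N => μ) Eᶜ) :=
            add_le_add hconc (measure_union_le _ _)
        _ = ENNReal.ofReal η + (Measure.pi fun _ : Fin N => μ) Gset := by
            rw [hEc, add_zero]
    exact tsub_le_iff_left.2 h1
  exact le_trans hmeasG (measure_mono hsubset)
end

section
/- (Distributionally robust upper bound for max-affine costs.) Let h(y) = max_{1 ≤ j ≤ J} (a_j · y + b_j) with a_j ∈ ℝ^d, b_j ∈ ℝ, set λ = max_{1 ≤ j ≤ J} ‖a_j‖_∞, let P̄ = (1/N)Σ_{i=1}^N δ_{ŷ^i} be a uniform empirical probability measure on points ŷ^1, …, ŷ^N ∈ ℝ^d, and let ε ≥ 0. Then for every probability measure Q on ℝ^d with finite first moment satisfying d_W(Q, P̄) ≤ ε, one has ∫ h dQ ≤ λ ε + (1/N)Σ_{i=1}^N h(ŷ^i). Equivalently, the supremum of E_Q[h] over the Wasserstein ball of radius ε centered at P̄ is at most λ ε + (1/N)Σ_i h(ŷ^i).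 -/
open MeasureTheory Matrix
open scoped ENNReal

/-- **Distributionally robust upper bound for max-affine costs.** For any
probability measure `Q` with finite first moment in the Wasserstein ball of radius `ε`
around the empirical measure of the points `ŷ¹, …, ŷᴺ`,
`∫ h dQ ≤ λ ε + (1/N) Σᵢ h(ŷⁱ)` where `λ = maxⱼ ‖aⱼ‖∞`. -/
theorem stmt16 {d J N : ℕ} (hJ : 0 < J) (hN : 0 < N)
    (a : Fin J → Fin d → ℝ) (b : Fin J → ℝ)
    (yhat : Fin N → Fin d → ℝ) (ε : ℝ) (hε : 0 ≤ ε)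
    (Q : Measure (Fin d → ℝ)) [IsProbabilityMeasure Q]
    (hQmom : Integrable (fun v => l1norm v) Q)
    (hball : wass Q (emp yhat) ≤ ε) :
    ∫ y, (⨆ j, (∑ i, a j i * y i + b j)) ∂Q
      ≤ (⨆ j, ⨆ i, |a j i|) * ε
        + (N : ℝ)⁻¹ * ∑ k, ⨆ j, (∑ i, a j i * yhat k i + b j) := by
  haveI : Nonempty (Fin J) := ⟨⟨0, hJ⟩⟩
  set h : (Fin d → ℝ) → ℝ := fun y => ⨆ j, (∑ i, a j i * y i + b j) with hh
  set lam : ℝ := ⨆ j, ⨆ i, |a j i| with hlamdef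
  set B : ℝ := ⨆ j, |b j| with hBdef
  have hlam0 : 0 ≤ lam := Real.iSup_nonneg fun j => Real.iSup_nonneg fun i => abs_nonneg _
  have hl1nonneg : ∀ v : Fin d → ℝ, 0 ≤ l1norm v := fun v =>
    Finset.sum_nonneg fun i _ => abs_nonneg _
  have hl1tri : ∀ x y : Fin d → ℝ, l1norm (x - y) ≤ l1norm x + l1norm y := by
    intro x y
    rw [l1norm, l1norm, l1norm, ← Finset.sum_add_distrib]
    exact Finset.sum_le_sum fun i _ => (abs_sub _ _)
  have hl1cont : Continuous fun v : Fin d → ℝ => l1norm v := by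
    unfold l1norm
    exact continuous_finset_sum _ fun i _ => (continuous_apply i).abs
  have hnormj : ∀ j (v : Fin d → ℝ), |∑ i, a j i * v i| ≤ lam * l1norm v := by
    intro j v
    calc |∑ i, a j i * v i| ≤ ∑ i, |a j i * v i| := Finset.abs_sum_le_sum_abs _ _
      _ ≤ ∑ i, lam * |v i| := by
          refine Finset.sum_le_sum fun i _ => ?_
          rw [abs_mul]
          refine mul_le_mul_of_nonneg_right ?_ (abs_nonneg _)
          calc |a j i| ≤ ⨆ i', |a j i'| := le_ciSup (f := fun i' => |a j i'|) (Finite.bddAbove_range _) i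
            _ ≤ lam := le_ciSup (f := fun j' => ⨆ i', |a j' i'|) (Finite.bddAbove_range _) j
      _ = lam * l1norm v := by rw [l1norm, Finset.mul_sum]
  have hle : ∀ x y, h x ≤ h y + lam * l1norm (x - y) := by
    intro x y
    refine ciSup_le fun j => ?_
    have hdiff : ∑ i, a j i * x i - ∑ i, a j i * y i = ∑ i, a j i * (x - y) i := by
      rw [← Finset.sum_sub_distrib]
      exact Finset.sum_congr rfl fun i _ => by simp [Pi.sub_apply]; ring
    have h2 : ∑ i, a j i * (x - y) i ≤ lam * l1norm (x - y) :=
      (le_abs_self _).trans (hnormj j (x - y))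
    have h3 : ∑ i, a j i * y i + b j ≤ h y := le_ciSup (f := fun j' => ∑ i, a j' i * y i + b j') (Finite.bddAbove_range _) j
    linarith
  have habsh : ∀ y, |h y| ≤ lam * l1norm y + B := by
    intro y
    rw [abs_le]
    constructor
    · have h3 : ∑ i, a (Classical.arbitrary (Fin J)) i * y i + b (Classical.arbitrary (Fin J)) ≤ h y :=
        le_ciSup (f := fun j' => ∑ i, a j' i * y i + b j') (Finite.bddAbove_range _) _
      have h1 : -(lam * l1norm y) ≤ ∑ i, a (Classical.arbitrary (Fin J)) i * y i := by
        have := hnormj (Classical.arbitrary (Fin J)) y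
        have := neg_abs_le (∑ i, a (Classical.arbitrary (Fin J)) i * y i)
        linarith
      have h2 : -B ≤ b (Classical.arbitrary (Fin J)) := by
        have hb : |b (Classical.arbitrary (Fin J))| ≤ B := le_ciSup (f := fun j' => |b j'|) (Finite.bddAbove_range _) _
        have := neg_abs_le (b (Classical.arbitrary (Fin J)))
        linarith
      linarith
    · refine ciSup_le fun j => ?_
      have h1 : ∑ i, a j i * y i ≤ lam * l1norm y := (le_abs_self _).trans (hnormj j y)
      have h2 : b j ≤ B := (le_abs_self _).trans (le_ciSup (f := fun j' => |b j'|) (Finite.bddAbove_range _) j)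
      linarith
  have hcont : Continuous h := by
    have heq : h = fun y => Finset.univ.sup' Finset.univ_nonempty
        (fun j => ∑ i, a j i * y i + b j) := by
      funext y; rw [Finset.sup'_univ_eq_ciSup]
    rw [heq]
    refine Continuous.finset_sup'_apply _ fun j _ => ?_
    exact (continuous_finset_sum _ fun i _ => (continuous_apply i).const_smul (a j i)).add
      continuous_const
  have hIntQ : Integrable h Q := by
    refine ((hQmom.const_mul lam).add (integrable_const B)).mono hcont.aestronglyMeasurable ?_
    filter_upwards with y
    rw [Real.norm_eq_abs, Real.norm_eq_abs]
    exact (habsh y).trans (le_abs_self _)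
  have hNne : (N : ℝ≥0∞) ≠ 0 := Nat.cast_ne_zero.mpr hN.ne'
  have hNinvne : ((N : ℝ≥0∞))⁻¹ ≠ ⊤ := ENNReal.inv_ne_top.mpr hNne
  have hint_emp_int : ∀ f : (Fin d → ℝ) → ℝ, StronglyMeasurable f → Integrable f (emp yhat) := by
    intro f hf
    rw [emp]
    refine Integrable.smul_measure ?_ hNinvne
    exact integrable_finset_sum_measure.mpr fun i _ =>
      (integrable_const (f (yhat i))).congr (ae_eq_dirac' hf.measurable).symm
  have hint_emp : ∀ f : (Fin d → ℝ) → ℝ, StronglyMeasurable f →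
      ∫ x, f x ∂(emp yhat) = (N : ℝ)⁻¹ * ∑ k, f (yhat k) := by
    intro f hf
    rw [emp, integral_smul_measure,
      integral_finset_sum_measure (fun i _ =>
        (integrable_const (f (yhat i))).congr (ae_eq_dirac' hf.measurable).symm)]
    simp only [integral_dirac' f _ hf, ENNReal.toReal_inv, ENNReal.toReal_natCast,
      smul_eq_mul]
  haveI hPemp : IsProbabilityMeasure (emp yhat) := by
    constructor
    rw [emp]
    simp only [Measure.smul_apply, Measure.coe_finset_sum, Finset.sum_apply,
      Measure.dirac_apply_of_mem (Set.mem_univ _), Finset.sum_const, Finset.card_univ,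
      Fintype.card_fin, nsmul_eq_mul, mul_one, smul_eq_mul]
    exact ENNReal.inv_mul_cancel hNne (ENNReal.natCast_ne_top N)
  set S : Set ℝ := { r | ∃ π : Measure ((Fin d → ℝ) × (Fin d → ℝ)),
    IsProbabilityMeasure π ∧ π.map Prod.fst = Q ∧ π.map Prod.snd = emp yhat ∧
    r = ∫ p, l1norm (p.1 - p.2) ∂π } with hSdef
  have hSne : S.Nonempty := by
    refine ⟨_, Q.prod (emp yhat), inferInstance, ?_, ?_, rfl⟩
    · rw [Measure.map_fst_prod]; simp
    · rw [Measure.map_snd_prod]; simp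
  have key : ∀ r ∈ S, ∫ y, h y ∂Q ≤ (N : ℝ)⁻¹ * ∑ k, h (yhat k) + lam * r := by
    rintro r ⟨π, hπ, hfst, hsnd, rfl⟩
    haveI := hπ
    have hmfst : AEMeasurable (Prod.fst : _ × _ → (Fin d → ℝ)) π := measurable_fst.aemeasurable
    have hmsnd : AEMeasurable (Prod.snd : _ × _ → (Fin d → ℝ)) π := measurable_snd.aemeasurable
    have hI1 : Integrable (fun p : (Fin d → ℝ) × (Fin d → ℝ) => h p.1) π := by
      have := (integrable_map_measure (hfst ▸ hcont.aestronglyMeasurable) hmfst).mp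
        (hfst ▸ hIntQ)
      exact this
    have hI2 : Integrable (fun p : (Fin d → ℝ) × (Fin d → ℝ) => h p.2) π := by
      have := (integrable_map_measure (hsnd ▸ hcont.aestronglyMeasurable) hmsnd).mp
        (hsnd ▸ hint_emp_int h hcont.stronglyMeasurable)
      exact this
    have hI3 : Integrable (fun p : (Fin d → ℝ) × (Fin d → ℝ) => l1norm p.1) π := by
      have := (integrable_map_measure (hfst ▸ hl1cont.aestronglyMeasurable) hmfst).mp
        (hfst ▸ hQmom)
      exact this
    have hI4 : Integrable (fun p : (Fin d → ℝ) × (Fin d → ℝ) => l1norm p.2) π := by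
      have := (integrable_map_measure (hsnd ▸ hl1cont.aestronglyMeasurable) hmsnd).mp
        (hsnd ▸ hint_emp_int _ hl1cont.stronglyMeasurable)
      exact this
    have hI5 : Integrable (fun p : (Fin d → ℝ) × (Fin d → ℝ) => l1norm (p.1 - p.2)) π := by
      refine (hI3.add hI4).mono
        ((hl1cont.comp (continuous_fst.sub continuous_snd)).aestronglyMeasurable) ?_
      filter_upwards with p
      simp only [Pi.add_apply, Real.norm_eq_abs]
      rw [abs_of_nonneg (hl1nonneg _), abs_of_nonneg (add_nonneg (hl1nonneg _) (hl1nonneg _))]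
      exact hl1tri _ _
    have heqfst : ∫ y, h y ∂Q = ∫ p, h p.1 ∂π := by
      rw [← hfst, integral_map hmfst (hfst ▸ hcont.aestronglyMeasurable)]
    have heqsnd : ∫ p, h p.2 ∂π = (N : ℝ)⁻¹ * ∑ k, h (yhat k) := by
      rw [← hint_emp h hcont.stronglyMeasurable, ← hsnd,
        integral_map hmsnd (hsnd ▸ hcont.aestronglyMeasurable)]
    calc ∫ y, h y ∂Q = ∫ p, h p.1 ∂π := heqfst
      _ ≤ ∫ p, (h p.2 + lam * l1norm (p.1 - p.2)) ∂π :=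
          integral_mono hI1 (hI2.add (hI5.const_mul lam)) fun p => hle p.1 p.2
      _ = ∫ p, h p.2 ∂π + lam * ∫ p, l1norm (p.1 - p.2) ∂π := by
          rw [integral_add hI2 (hI5.const_mul lam), integral_const_mul]
      _ = (N : ℝ)⁻¹ * ∑ k, h (yhat k) + lam * ∫ p, l1norm (p.1 - p.2) ∂π := by rw [heqsnd]
  have hwass : wass Q (emp yhat) = sInf S := rfl
  have hmain : ∫ y, h y ∂Q - (N : ℝ)⁻¹ * ∑ k, h (yhat k) ≤ lam * wass Q (emp yhat) := by
    rcases eq_or_lt_of_le hlam0 with hl | hl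
    · obtain ⟨r, hr⟩ := hSne
      have := key r hr
      rw [← hl] at this ⊢
      linarith
    · have hdiv : (∫ y, h y ∂Q - (N : ℝ)⁻¹ * ∑ k, h (yhat k)) / lam ≤ sInf S := by
        refine le_csInf hSne fun r hr => ?_
        rw [div_le_iff₀ hl]
        have := key r hr
        linarith [mul_comm r lam]
      rw [hwass]
      have := (div_le_iff₀ hl).mp hdiv
      linarith [mul_comm (sInf S) lam]
  have hlast : lam * wass Q (emp yhat) ≤ lam * ε := mul_le_mul_of_nonneg_left hball hlam0
  linarith
end
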